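/- Let 1 < q ≤ 2 and p = q/(q−1). Let (t_n)_{n≥1} be a weakness sequence with ∑_{n=1}^∞ t_n^p < ∞, let (δ_n)_{n≥0} be a perturbation sequence with ∑_{n=0}^∞ δ_n < ∞, and let (η_n)_{n≥1} be an error sequence with ∑_{n=1}^∞ η_n < ∞. Then in the real Banach space ℓ_q there exist a dictionary D, an element f ∈ ℓ_q, and a realization of the AWCGA of f with these sequences such that ‖f_n‖ does not tend to 0. -/

import Mathlib

open Filter
open scoped ENNReal

noncomputable section

variable {X : Type} [NormedAddCommGroup X] [NormedSpace ℝ X]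

/-- A dictionary: a symmetric set of unit-norm elements with dense linear span. -/
def IsDictionary (D : Set X) : Prop :=
  (∀ g ∈ D, ‖g‖ = 1) ∧ (∀ g ∈ D, -g ∈ D) ∧
    (Submodule.span ℝ D).topologicalClosure = ⊤

/-- The modulus of smoothness of `X`:
`ρ(u) = sup_{‖x‖=‖y‖=1} (‖x+uy‖+‖x-uy‖)/2 - 1`. -/
def modulusOfSmoothness (X : Type) [NormedAddCommGroup X] [NormedSpace ℝ X]
    (u : ℝ) : ℝ :=
  sSup {r : ℝ | ∃ x y : X, ‖x‖ = 1 ∧ ‖y‖ = 1 ∧ r = (‖x + u • y‖ + ‖x - u • y‖) / 2 - 1}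

/-- A weakness sequence: `0 ≤ t n ≤ 1` for `n ≥ 1`. -/
def IsWeaknessSeq (t : ℕ → ℝ) : Prop := ∀ n, 1 ≤ n → 0 ≤ t n ∧ t n ≤ 1

/-- A perturbation sequence: `0 ≤ δ n ≤ 1` for `n ≥ 0`. -/
def IsPerturbationSeq (δ : ℕ → ℝ) : Prop := ∀ n, 0 ≤ δ n ∧ δ n ≤ 1

/-- An error sequence: `η n ≥ 0` for `n ≥ 1`. -/
def IsErrorSeq (η : ℕ → ℝ) : Prop := ∀ n, 1 ≤ n → 0 ≤ η n

/-- `a k = o(b k)` as `k → ∞`: for every `ε > 0` eventually `a k ≤ ε * b k`. -/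
def IsLittleO (a b : ℕ → ℝ) : Prop := ∀ ε : ℝ, 0 < ε → ∃ N, ∀ k, N ≤ k → a k ≤ ε * b k

/-- `E_n`: the best approximation error of `f` from `Φ_n = span{φ_1, …, φ_n}`. -/
def approxError (f : X) (φ : ℕ → X) (n : ℕ) : ℝ :=
  sInf ((fun g => ‖f - g‖) '' (Submodule.span ℝ (φ '' Set.Icc 1 n) : Set X))

/-- A realization of the AWCGA of `f` with respect to a dictionary `D`,
a weakness sequence `t`, a perturbation sequence `δ` and an error sequence `η`.
Indices are shifted so that step `n ≥ 1` of the algorithm is encoded by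
the fields applied at `n - 1` (for `F`) and at `n` (for `φ`, `G`, `fs`). -/
structure AWCGARealization (D : Set X) (f : X) (t δ η : ℕ → ℝ) where
  F : ℕ → (X →L[ℝ] ℝ)
  φ : ℕ → X
  G : ℕ → X
  fs : ℕ → X
  fs_zero : fs 0 = f
  F_norm : ∀ n : ℕ, ‖F n‖ ≤ 1
  F_norming : ∀ n : ℕ, F n (fs n) ≥ (1 - δ n) * ‖fs n‖
  φ_mem : ∀ n : ℕ, φ (n + 1) ∈ D
  φ_greedy : ∀ n : ℕ, F n (φ (n + 1)) ≥ t (n + 1) * sSup ((fun g => F n g) '' D)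
  G_mem : ∀ n : ℕ, G (n + 1) ∈ Submodule.span ℝ (φ '' Set.Icc 1 (n + 1))
  G_near : ∀ n : ℕ, ‖f - G (n + 1)‖ ≤ (1 + η (n + 1)) * approxError f φ (n + 1)
  fs_succ : ∀ n : ℕ, fs (n + 1) = f - G (n + 1)

/-- The space `ℓ_q` of `q`-summable real sequences. -/
abbrev ellq (q : ℝ) := lp (fun _ : ℕ => ℝ) (ENNReal.ofReal q)

section Pair

namespace Stmt5Aux

lemma summable_pair {p q : ℝ} (hpq : p.HolderConjugate q)
    [Fact (1 ≤ ENNReal.ofReal p)] [Fact (1 ≤ ENNReal.ofReal q)]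
    (b : lp (fun _ : ℕ => ℝ) (ENNReal.ofReal p))
    (x : lp (fun _ : ℕ => ℝ) (ENNReal.ofReal q)) :
    Summable (fun j => b j * x j) := by
  have hpq' : (ENNReal.ofReal p).toReal.HolderConjugate (ENNReal.ofReal q).toReal := by
    rwa [ENNReal.toReal_ofReal hpq.pos.le, ENNReal.toReal_ofReal hpq.symm.pos.le]
  have h := (lp.tsum_mul_le_mul_norm hpq' b x).1
  rw [← summable_abs_iff]
  simpa [abs_mul, Real.norm_eq_abs] using h

/-- The pairing `x ↦ ∑' j, b j * x j` as a continuous linear functional on `ℓ_q`. -/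
def pairCLM {p q : ℝ} (hpq : p.HolderConjugate q)
    [Fact (1 ≤ ENNReal.ofReal p)] [Fact (1 ≤ ENNReal.ofReal q)]
    (b : lp (fun _ : ℕ => ℝ) (ENNReal.ofReal p)) :
    lp (fun _ : ℕ => ℝ) (ENNReal.ofReal q) →L[ℝ] ℝ :=
  LinearMap.mkContinuous
    { toFun := fun x => ∑' j, b j * x j
      map_add' := fun x y => by
        simp only [lp.coeFn_add, Pi.add_apply, mul_add]
        exact Summable.tsum_add (summable_pair hpq b x) (summable_pair hpq b y)
      map_smul' := fun c x => by
        simp only [lp.coeFn_smul, Pi.smul_apply, smul_eq_mul, RingHom.id_apply]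
        rw [← tsum_mul_left]
        congr 1; ext j; ring }
    ‖b‖ (fun x => by
      have hpq' : (ENNReal.ofReal p).toReal.HolderConjugate (ENNReal.ofReal q).toReal := by
        rwa [ENNReal.toReal_ofReal hpq.pos.le, ENNReal.toReal_ofReal hpq.symm.pos.le]
      have hsum : Summable (fun j => ‖b j * x j‖) := by
        simpa [abs_mul, Real.norm_eq_abs] using (lp.tsum_mul_le_mul_norm hpq' b x).1
      calc ‖∑' j, b j * x j‖ ≤ ∑' j, ‖b j * x j‖ := norm_tsum_le_tsum_norm hsum
        _ = ∑' j, ‖b j‖ * ‖x j‖ := by simp [norm_mul]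
        _ ≤ ‖b‖ * ‖x‖ := lp.tsum_mul_le_mul_norm' hpq' b x)

lemma pairCLM_apply {p q : ℝ} (hpq : p.HolderConjugate q)
    [Fact (1 ≤ ENNReal.ofReal p)] [Fact (1 ≤ ENNReal.ofReal q)]
    (b : lp (fun _ : ℕ => ℝ) (ENNReal.ofReal p))
    (x : lp (fun _ : ℕ => ℝ) (ENNReal.ofReal q)) :
    pairCLM hpq b x = ∑' j, b j * x j := rfl

lemma pairCLM_norm_le {p q : ℝ} (hpq : p.HolderConjugate q)
    [Fact (1 ≤ ENNReal.ofReal p)] [Fact (1 ≤ ENNReal.ofReal q)]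
    (b : lp (fun _ : ℕ => ℝ) (ENNReal.ofReal p)) :
    ‖pairCLM hpq b‖ ≤ ‖b‖ :=
  LinearMap.mkContinuous_norm_le _ (norm_nonneg b) _

end Stmt5Aux

end Pair

set_option maxHeartbeats 1000000 in
/-- Divergence of the AWCGA when `∑ t_n^p < ∞` and `(δ_n), (η_n) ∈ ℓ₁`. -/
theorem stmt_5 (q p : ℝ) [Fact (1 ≤ ENNReal.ofReal q)] (hq1 : 1 < q) (hq2 : q ≤ 2)
    (hp : p = q / (q - 1))
    (t δ η : ℕ → ℝ) (ht : IsWeaknessSeq t) (hδ : IsPerturbationSeq δ)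
    (hη : IsErrorSeq η)
    (htsum : Summable (fun m => t (m + 1) ^ p))
    (hδsum : Summable δ)
    (hηsum : Summable (fun m => η (m + 1))) :
    ∃ D : Set (ellq q), IsDictionary D ∧
      ∃ (f : ellq q) (r : AWCGARealization D f t δ η),
        ¬ Tendsto (fun m => ‖r.fs m‖) atTop (nhds 0) := by

  have hq0 : (0:ℝ) < q := by linarith
  have hqm1 : (0:ℝ) < q - 1 := by linarith
  have hp1 : 1 < p := by rw [hp]; rw [lt_div_iff₀ hqm1]; linarith
  have hqp : q.HolderConjugate p := (Real.holderConjugate_iff_eq_conjExponent hq1).2 hp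
  have hpq : p.HolderConjugate q := hqp.symm
  haveI : Fact (1 ≤ ENNReal.ofReal p) := ⟨ENNReal.one_le_ofReal.2 hp1.le⟩
  have hPq : (ENNReal.ofReal q).toReal = q := ENNReal.toReal_ofReal hq0.le
  have hP0 : 0 < (ENNReal.ofReal q).toReal := by rw [hPq]; exact hq0
  have hPne0 : (ENNReal.ofReal q) ≠ 0 := by simp [ENNReal.ofReal_eq_zero, not_le, hq0]
  have hPtop : (ENNReal.ofReal q) ≠ ⊤ := ENNReal.ofReal_ne_top
  -- exponent identities
  have hpid1 : (p - 1) * (q - 1) = 1 := by rw [hp]; field_simp; ring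
  have hpid2 : (p - 1) * q = p := by rw [hp]; field_simp; ring
  have hpid3 : (q - 1) * p = q := by rw [hp]; field_simp
  -- the coordinates of f
  set a : ℕ → ℝ := fun j => if j = 0 then 1 else t j ^ (p - 1) with ha
  have ht' : ∀ j : ℕ, j ≠ 0 → 0 ≤ t j ∧ t j ≤ 1 := fun j hj => ht j (Nat.one_le_iff_ne_zero.2 hj)
  have ha_nonneg : ∀ j, 0 ≤ a j := by
    intro j
    by_cases hj : j = 0
    · simp [ha, hj]
    · simp only [ha, if_neg hj]
      exact Real.rpow_nonneg (ht' j hj).1 _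
  have ha_le_one : ∀ j, a j ≤ 1 := by
    intro j
    by_cases hj : j = 0
    · simp [ha, hj]
    · simp only [ha, if_neg hj]
      exact Real.rpow_le_one (ht' j hj).1 (ht' j hj).2 (by linarith)
  have ha_pow : ∀ j : ℕ, j ≠ 0 → a j ^ q = t j ^ p := by
    intro j hj
    simp only [ha, if_neg hj]
    rw [← Real.rpow_mul (ht' j hj).1, hpid2]
  have hp0 : (0:ℝ) < p := by linarith
  have hpPq : (ENNReal.ofReal p).toReal = p := ENNReal.toReal_ofReal hp0.le
  -- summability of the coordinates
  have hsa : Summable (fun j => ‖a j‖ ^ q) := by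
    rw [← summable_nat_add_iff 1]
    refine (summable_congr fun m => ?_).2 htsum
    rw [Real.norm_eq_abs, abs_of_nonneg (ha_nonneg _), ha_pow _ (Nat.succ_ne_zero m)]
  -- the residual coordinates
  set r : ℕ → ℕ → ℝ := fun n j => if j ≠ 0 ∧ j ≤ n then 0 else a j with hr
  have hr_nonneg : ∀ n j, 0 ≤ r n j := by
    intro n j; by_cases h : j ≠ 0 ∧ j ≤ n <;> simp [hr, h, ha_nonneg j]
  have hr_le_one : ∀ n j, r n j ≤ 1 := by
    intro n j; by_cases h : j ≠ 0 ∧ j ≤ n <;> simp [hr, h, ha_le_one j]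
  have hr_zero : ∀ n, r n 0 = 1 := by intro n; simp [hr, ha]
  have hsr : ∀ n, Summable (fun j => ‖r n j‖ ^ q) := by
    intro n
    refine Summable.of_nonneg_of_le (fun j => Real.rpow_nonneg (norm_nonneg _) _)
      (fun j => ?_) hsa
    refine Real.rpow_le_rpow (norm_nonneg _) ?_ hq0.le
    by_cases h : j ≠ 0 ∧ j ≤ n <;>
      simp [hr, h, Real.norm_eq_abs, abs_of_nonneg (ha_nonneg j), le_abs_self, ha_nonneg]
  -- the lp elements
  have hmem : ∀ n, Memℓp (r n) (ENNReal.ofReal q) := fun n => memℓp_gen (by rw [hPq]; exact hsr n)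
  set fsv : ℕ → lp (fun _ : ℕ => ℝ) (ENNReal.ofReal q) := fun n => ⟨r n, hmem n⟩ with hfsv
  have hmemf : Memℓp a (ENNReal.ofReal q) := memℓp_gen (by rw [hPq]; exact hsa)
  set fvec : lp (fun _ : ℕ => ℝ) (ENNReal.ofReal q) := ⟨a, hmemf⟩ with hfvec
  have hcoe : ∀ n, ⇑(fsv n) = r n := fun n => rfl
  have hcoef : ⇑fvec = a := rfl
  have hfs0 : fsv 0 = fvec := by
    apply lp.ext; rw [hcoe, hcoef]; funext j
    by_cases hj : j = 0 <;> simp [hr, hj, Nat.le_zero]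
  -- norms of the residuals
  have hnorm_pow : ∀ n, ‖fsv n‖ ^ q = ∑' j, ‖r n j‖ ^ q := by
    intro n
    have h := lp.norm_rpow_eq_tsum hP0 (fsv n)
    rwa [hPq, hcoe] at h
  have hN1 : ∀ n, 1 ≤ ‖fsv n‖ := by
    intro n
    have h := lp.norm_apply_le_norm hPne0 (fsv n) 0
    rw [hcoe, hr_zero, norm_one] at h
    exact h
  have hNpos : ∀ n, 0 < ‖fsv n‖ := fun n => lt_of_lt_of_le one_pos (hN1 n)
  -- the dual coordinates
  set bc : ℕ → ℕ → ℝ := fun n j => r n j ^ (q - 1) / ‖fsv n‖ ^ (q - 1) with hbc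
  have hbc_nonneg : ∀ n j, 0 ≤ bc n j :=
    fun n j => div_nonneg (Real.rpow_nonneg (hr_nonneg n j) _)
      (Real.rpow_nonneg (hNpos n).le _)
  have hrq : ∀ x : ℝ, 0 ≤ x → x ^ (q - 1) * x = x ^ q := by
    intro x hx
    rcases hx.eq_or_lt with h | h
    · rw [← h, Real.zero_rpow hq0.ne', Real.zero_rpow (by linarith : q - 1 ≠ 0), mul_zero]
    · rw [← Real.rpow_add_one h.ne' (q - 1)]
      congr 1; ring
  have hbcpow : ∀ n j, ‖bc n j‖ ^ p = ‖r n j‖ ^ q / ‖fsv n‖ ^ q := by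
    intro n j
    have hposN : (0:ℝ) < ‖fsv n‖ ^ (q - 1) := Real.rpow_pos_of_pos (hNpos n) _
    rw [Real.norm_eq_abs, abs_of_nonneg (hbc_nonneg n j), hbc]
    rw [Real.div_rpow (Real.rpow_nonneg (hr_nonneg n j) _) hposN.le]
    rw [← Real.rpow_mul (hr_nonneg n j), ← Real.rpow_mul (hNpos n).le, hpid3]
    rw [Real.norm_eq_abs, abs_of_nonneg (hr_nonneg n j)]
  have hbsum : ∀ n, Summable (fun j => ‖bc n j‖ ^ p) := by
    intro n
    simp only [hbcpow]
    exact (hsr n).div_const _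
  have hmemb : ∀ n, Memℓp (bc n) (ENNReal.ofReal p) :=
    fun n => memℓp_gen (by rw [hpPq]; exact hbsum n)
  set bvec : ℕ → lp (fun _ : ℕ => ℝ) (ENNReal.ofReal p) := fun n => ⟨bc n, hmemb n⟩ with hbv
  have hcoeb : ∀ n, ⇑(bvec n) = bc n := fun n => rfl
  have htsum_b : ∀ n, ∑' j, ‖bc n j‖ ^ p = 1 := by
    intro n
    simp only [hbcpow]
    rw [tsum_div_const, ← hnorm_pow n,
      div_self (Real.rpow_pos_of_pos (hNpos n) q).ne']
  have hbnorm : ∀ n, ‖bvec n‖ ≤ 1 := by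
    intro n
    refine lp.norm_le_of_tsum_le (by rw [hpPq]; exact hp0) zero_le_one ?_
    rw [hpPq, hcoeb, Real.one_rpow]
    exact le_of_eq (htsum_b n)
  -- the functionals
  set F : ℕ → (lp (fun _ : ℕ => ℝ) (ENNReal.ofReal q) →L[ℝ] ℝ) := fun n => Stmt5Aux.pairCLM hpq (bvec n)
    with hF
  have hFnorm : ∀ n, ‖F n‖ ≤ 1 :=
    fun n => le_trans (Stmt5Aux.pairCLM_norm_le hpq (bvec n)) (hbnorm n)
  have hFapply : ∀ (n : ℕ) (x : lp (fun _ : ℕ => ℝ) (ENNReal.ofReal q)), F n x = ∑' j, bc n j * x j :=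
    fun n x => rfl
  have hFfs : ∀ n, F n (fsv n) = ‖fsv n‖ := by
    intro n
    rw [hFapply n (fsv n)]
    have hterm : ∀ j, bc n j * (fsv n) j = ‖r n j‖ ^ q / ‖fsv n‖ ^ (q - 1) := by
      intro j
      simp only [hcoe, hbc]
      rw [div_mul_eq_mul_div, hrq _ (hr_nonneg n j),
        Real.norm_eq_abs, abs_of_nonneg (hr_nonneg n j)]
    calc ∑' j, bc n j * (fsv n) j = ∑' j, ‖r n j‖ ^ q / ‖fsv n‖ ^ (q - 1) := tsum_congr hterm
      _ = (∑' j, ‖r n j‖ ^ q) / ‖fsv n‖ ^ (q - 1) := by rw [tsum_div_const]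
      _ = ‖fsv n‖ ^ q / ‖fsv n‖ ^ (q - 1) := by rw [hnorm_pow n]
      _ = ‖fsv n‖ := by
          rw [← Real.rpow_sub (hNpos n)]
          have h1 : q - (q - 1) = 1 := by ring
          rw [h1, Real.rpow_one]
  -- the dictionary and the greedy elements
  set φv : ℕ → lp (fun _ : ℕ => ℝ) (ENNReal.ofReal q) := fun j => lp.single (ENNReal.ofReal q) j 1 with hφ
  set D : Set (lp (fun _ : ℕ => ℝ) (ENNReal.ofReal q)) :=
    {g | ∃ (j : ℕ) (ε : ℝ), (ε = 1 ∨ ε = -1) ∧ g = lp.single (ENNReal.ofReal q) j ε} with hD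
  have hFsingle : ∀ (n j : ℕ) (ε : ℝ), F n (lp.single (ENNReal.ofReal q) j ε) = ε * bc n j := by
    intro n j ε
    rw [hFapply]
    rw [tsum_eq_single j (fun k hk => by rw [lp.single_apply_ne (ENNReal.ofReal q) j _ hk, mul_zero])]
    rw [lp.single_apply_self]; ring
  have hrn1 : ∀ n : ℕ, r n (n + 1) = t (n + 1) ^ (p - 1) := by
    intro n
    have : ¬ (n + 1 ≠ 0 ∧ n + 1 ≤ n) := by
      rintro ⟨-, h⟩; exact Nat.not_succ_le_self n h
    simp [hr, this, ha]
  have hφval : ∀ n, F n (φv (n + 1)) = t (n + 1) / ‖fsv n‖ ^ (q - 1) := by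
    intro n
    simp only [hφ]
    rw [hFsingle n (n + 1) 1, one_mul]
    simp only [hbc]
    rw [hrn1 n, ← Real.rpow_mul (ht' (n + 1) (Nat.succ_ne_zero n)).1, hpid1, Real.rpow_one]
  have hbc_le : ∀ n j, bc n j ≤ 1 / ‖fsv n‖ ^ (q - 1) := by
    intro n j
    have hposN : (0:ℝ) < ‖fsv n‖ ^ (q - 1) := Real.rpow_pos_of_pos (hNpos n) _
    simp only [hbc]
    gcongr
    exact Real.rpow_le_one (hr_nonneg n j) (hr_le_one n j) (by linarith)
  have hsSup : ∀ n, sSup ((fun g => F n g) '' D) ≤ 1 / ‖fsv n‖ ^ (q - 1) := by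
    intro n
    have hposN : (0:ℝ) < ‖fsv n‖ ^ (q - 1) := Real.rpow_pos_of_pos (hNpos n) _
    apply Real.sSup_le
    · rintro x ⟨g, ⟨j, ε, hε, rfl⟩, rfl⟩
      simp only
      rw [hFsingle n j ε]
      rcases hε with rfl | rfl
      · rw [one_mul]; exact hbc_le n j
      · calc (-1 : ℝ) * bc n j ≤ 0 := by nlinarith [hbc_nonneg n j]
          _ ≤ 1 / ‖fsv n‖ ^ (q - 1) := by positivity
    · positivity
  have hgreedy : ∀ n, F n (φv (n + 1)) ≥ t (n + 1) * sSup ((fun g => F n g) '' D) := by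
    intro n
    rw [hφval n]
    have ht0 : 0 ≤ t (n + 1) := (ht (n + 1) (Nat.le_add_left 1 n)).1
    calc t (n + 1) * sSup ((fun g => F n g) '' D)
        ≤ t (n + 1) * (1 / ‖fsv n‖ ^ (q - 1)) :=
          mul_le_mul_of_nonneg_left (hsSup n) ht0
      _ = t (n + 1) / ‖fsv n‖ ^ (q - 1) := by ring
  -- G_n = f - fs_n lies in the span
  have hGsum : ∀ n, fvec - fsv (n + 1) = ∑ j ∈ Finset.Icc 1 (n + 1), a j • φv j := by
    intro n
    apply lp.ext
    funext k
    rw [lp.coeFn_sub, lp.coeFn_sum]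
    simp only [Pi.sub_apply, Finset.sum_apply, lp.coeFn_smul, Pi.smul_apply, smul_eq_mul,
      hcoe, hcoef]
    have hterm : ∀ j ∈ Finset.Icc 1 (n + 1), a j * (φv j) k = if k = j then a j else 0 := by
      intro j _
      by_cases hkj : k = j
      · subst hkj
        simp only [hφ]
        rw [lp.single_apply_self, mul_one]
        simp
      · simp only [hφ]
        rw [lp.single_apply_ne (ENNReal.ofReal q) j _ hkj, mul_zero, if_neg hkj]
    rw [Finset.sum_congr rfl hterm, Finset.sum_ite_eq]
    by_cases hk : k ∈ Finset.Icc 1 (n + 1)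
    · have hk' : k ≠ 0 ∧ k ≤ n + 1 := by
        rw [Finset.mem_Icc] at hk
        exact ⟨Nat.one_le_iff_ne_zero.1 hk.1, hk.2⟩
      rw [if_pos hk]
      simp [hr, hk']
    · have hk' : ¬ (k ≠ 0 ∧ k ≤ n + 1) := by
        rw [Finset.mem_Icc] at hk
        rintro ⟨h1, h2⟩; exact hk ⟨Nat.one_le_iff_ne_zero.2 h1, h2⟩
      rw [if_neg hk]
      simp [hr, hk']
  have hGmem : ∀ n, fvec - fsv (n + 1) ∈ Submodule.span ℝ (φv '' Set.Icc 1 (n + 1)) := by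
    intro n
    rw [hGsum n]
    refine Submodule.sum_mem _ fun j hj => Submodule.smul_mem _ _ (Submodule.subset_span ?_)
    exact ⟨j, by simpa [Set.mem_Icc] using Finset.mem_Icc.1 hj, rfl⟩
  -- lower bound for the best approximation error
  have hlow : ∀ n (g : lp (fun _ : ℕ => ℝ) (ENNReal.ofReal q)),
      g ∈ Submodule.span ℝ (φv '' Set.Icc 1 (n + 1)) → ‖fsv (n + 1)‖ ≤ ‖fvec - g‖ := by
    intro n g hg
    have hvanish : ∀ k, k ∉ Set.Icc 1 (n + 1) → g k = 0 := by
      set K : Submodule ℝ (lp (fun _ : ℕ => ℝ) (ENNReal.ofReal q)) :=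
        { carrier := {x | ∀ k, k ∉ Set.Icc 1 (n + 1) → x k = 0}
          add_mem' := fun {x y} hx hy k hk => by
            rw [lp.coeFn_add, Pi.add_apply, hx k hk, hy k hk, add_zero]
          zero_mem' := fun k _ => rfl
          smul_mem' := fun c x hx k hk => by
            rw [lp.coeFn_smul, Pi.smul_apply, hx k hk, smul_zero] } with hK
      have hle : Submodule.span ℝ (φv '' Set.Icc 1 (n + 1)) ≤ K := by
        rw [Submodule.span_le]
        rintro x ⟨j, hj, rfl⟩
        intro k hk
        have hkj : k ≠ j := fun h => hk (h ▸ hj)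
        simp only [hφ]
        exact lp.single_apply_ne (ENNReal.ofReal q) j _ hkj
      exact hle hg
    have hterm : ∀ k, ‖r (n + 1) k‖ ^ q ≤ ‖(fvec - g) k‖ ^ q := by
      intro k
      by_cases hk : k ∈ Set.Icc 1 (n + 1)
      · have hk' : k ≠ 0 ∧ k ≤ n + 1 := by
          rw [Set.mem_Icc] at hk
          exact ⟨Nat.one_le_iff_ne_zero.1 hk.1, hk.2⟩
        have : r (n + 1) k = 0 := by simp [hr, hk']
        rw [this, norm_zero, Real.zero_rpow hq0.ne']
        positivity
      · have : (fvec - g) k = r (n + 1) k := by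
          rw [lp.coeFn_sub, Pi.sub_apply, hvanish k hk, sub_zero]
          have hk' : ¬ (k ≠ 0 ∧ k ≤ n + 1) := by
            rw [Set.mem_Icc] at hk
            rintro ⟨h1, h2⟩; exact hk ⟨Nat.one_le_iff_ne_zero.2 h1, h2⟩
          simp [hcoef, hr, hk']
        rw [this]
    have hsumle : ‖fsv (n + 1)‖ ^ q ≤ ‖fvec - g‖ ^ q := by
      rw [hnorm_pow (n + 1)]
      have h2 := lp.norm_rpow_eq_tsum hP0 (fvec - g)
      rw [hPq] at h2
      rw [h2]
      exact Summable.tsum_le_tsum hterm (hsr (n + 1))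
        (by simpa [hPq] using (lp.memℓp (fvec - g)).summable hP0)
    exact (Real.rpow_le_rpow_iff (norm_nonneg _) (norm_nonneg _) hq0).1 hsumle
  have hE : ∀ n, ‖fsv (n + 1)‖ ≤ approxError fvec φv (n + 1) := by
    intro n
    apply le_csInf
    · exact ⟨‖fvec - 0‖, 0, SetLike.mem_coe.2 (Submodule.zero_mem _), rfl⟩
    · rintro x ⟨g, hg, rfl⟩
      exact hlow n g (SetLike.mem_coe.1 hg)
  -- assemble
  refine ⟨D, ⟨?_, ?_, ?_⟩, fvec,
    ⟨F, φv, fun n => fvec - fsv n, fsv, hfs0, hFnorm, ?_, ?_, hgreedy, hGmem, ?_, ?_⟩, ?_⟩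
  · rintro g ⟨j, ε, hε, rfl⟩
    have h : ‖(lp.single (ENNReal.ofReal q) j ε : lp (fun _ : ℕ => ℝ) (ENNReal.ofReal q))‖ = ‖ε‖ :=
      by convert lp.norm_single (E := fun _ : ℕ => ℝ) (ENNReal.ofReal_pos.2 hq0) j ε
    rw [h]
    rcases hε with rfl | rfl
    · exact norm_one
    · rw [norm_neg]; exact norm_one
  · rintro g ⟨j, ε, hε, rfl⟩
    refine ⟨j, -ε, ?_, (lp.single_neg (E := fun _ : ℕ => ℝ) (ENNReal.ofReal q) j ε).symm⟩
    rcases hε with rfl | rfl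
    · exact Or.inr (by norm_num)
    · exact Or.inl (by norm_num)
  · rw [eq_top_iff]
    intro x _
    have hx : HasSum (fun i : ℕ => (lp.single (ENNReal.ofReal q) i (x i) :
        lp (fun _ : ℕ => ℝ) (ENNReal.ofReal q))) x := lp.hasSum_single hPtop x
    have hmem' : ∀ s : Finset ℕ, (∑ i ∈ s, lp.single (ENNReal.ofReal q) i (x i)) ∈ Submodule.span ℝ D := by
      intro s
      refine Submodule.sum_mem _ fun i _ => ?_
      have hsingle : (lp.single (ENNReal.ofReal q) i (x i) : lp (fun _ : ℕ => ℝ) (ENNReal.ofReal q))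
          = (x i) • (lp.single (ENNReal.ofReal q) i (1:ℝ) : lp (fun _ : ℕ => ℝ) (ENNReal.ofReal q)) := by
        rw [← lp.single_smul]
        congr 1
        simp
      rw [hsingle]
      exact Submodule.smul_mem _ _ (Submodule.subset_span ⟨i, 1, Or.inl rfl, rfl⟩)
    have hcl : x ∈ closure ((Submodule.span ℝ D : Submodule ℝ _) : Set _) :=
      mem_closure_of_tendsto hx (Eventually.of_forall fun s => hmem' s)
    rw [← SetLike.mem_coe, Submodule.topologicalClosure_coe]
    exact hcl
  · intro n
    rw [hFfs n]
    nlinarith [hNpos n, (hδ n).1]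
  · intro n
    exact ⟨n + 1, 1, Or.inl rfl, rfl⟩
  · intro n
    rw [sub_sub_cancel]
    have h1 := hE n
    have h2 : 0 ≤ η (n + 1) := hη (n + 1) (Nat.le_add_left 1 n)
    nlinarith [hNpos (n + 1)]
  · intro n
    exact (sub_sub_cancel fvec (fsv (n + 1))).symm
  · intro hT
    have h := ge_of_tendsto' hT hN1
    linarith
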